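/- Let h > 0. Suppose v : ℝ → ℝ and δ : ℝ → (-h,0) are continuously differentiable with bounded derivatives, δ is injective, v(y) = 0 for y ≤ 0 and v'(y) > 0 for y > 0. Define d(φ) = δ(∫_{-h}^0 v(φ(t)) dt) on C¹([-h,0],ℝ). Then for every b > 0 and every closed subspace Z ⊆ C¹([-h,0],ℝ) of finite codimension, d is not constant on U_b ∩ Z, where U_b = {φ ∈ C¹ : |φ'(t)| < b for all t ∈ [-h, d(φ)]}. -/

import Mathlib

open Set

/-- The Banach space `C¹([-h,0],ℝ)`, modelled as the closed subspace of
`C([-h,0],ℝ) × C([-h,0],ℝ)` consisting of pairs `(φ, φ')` where the second component is the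
derivative of the first within `[-h,0]`. -/
noncomputable def D1 (h : ℝ) (hh : 0 < h) :
    Submodule ℝ (C(Icc (-h) 0, ℝ) × C(Icc (-h) 0, ℝ)) where
  carrier := {p | ∀ t : Icc (-h) 0,
      HasDerivWithinAt (fun s : ℝ => p.1 (projIcc (-h) 0 (by linarith) s))
        (p.2 t) (Icc (-h) 0) (t : ℝ)}
  add_mem' := by
    intro p q hp hq t
    first
    | exact (hp t).add (hq t)
    | simpa using (hp t).fun_add (hq t)
  zero_mem' := by
    intro t
    simpa using hasDerivWithinAt_const (t : ℝ) (Icc (-h) 0) (0 : ℝ)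
  smul_mem' := by
    intro c p hp t
    first
    | exact (hp t).const_smul c
    | simpa using (hp t).fun_const_smul c

noncomputable instance D1.instNormedAddCommGroup (h : ℝ) (hh : 0 < h) :
    NormedAddCommGroup (D1 h hh) := by infer_instance

noncomputable instance D1.instNormedSpace (h : ℝ) (hh : 0 < h) :
    NormedSpace ℝ (D1 h hh) := by infer_instance

set_option maxHeartbeats 1000000 in
/-- Suppose `v, δ` are continuously differentiable with bounded derivatives, `δ : ℝ → (-h,0)`
is injective, `v(y) = 0` for `y ≤ 0` and `v'(y) > 0` for `y > 0`. Define
`d(φ) = δ(∫_{-h}^0 v(φ(t)) dt)` on `C¹([-h,0],ℝ)`. Then for every `b > 0` and every closed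
subspace `Z` of `C¹([-h,0],ℝ)` of finite codimension, `d` is not constant on `U_b ∩ Z`, where
`U_b = {φ ∈ C¹ : |φ'(t)| < b for all t ∈ [-h, d(φ)]}`. -/
theorem stmt13 (h : ℝ) (hh : 0 < h) (v δ : ℝ → ℝ)
    (hv : ContDiff ℝ 1 v) (hδ : ContDiff ℝ 1 δ)
    (Cv Cδ : ℝ) (hCv : ∀ y, |deriv v y| ≤ Cv) (hCδ : ∀ w, |deriv δ w| ≤ Cδ)
    (hδr : ∀ w, δ w ∈ Ioo (-h) 0) (hδinj : Function.Injective δ)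
    (hv0 : ∀ y ≤ (0 : ℝ), v y = 0) (hv' : ∀ y > (0 : ℝ), 0 < deriv v y)
    (d : D1 h hh → ℝ)
    (hd : ∀ φ : D1 h hh, d φ = δ (∫ t in (-h)..0,
      v ((φ : C(Icc (-h) 0, ℝ) × C(Icc (-h) 0, ℝ)).1 (projIcc (-h) 0 (by linarith) t))))
    (b : ℝ) (hb : 0 < b)
    (Z : Submodule ℝ (D1 h hh)) (hZclosed : IsClosed (Z : Set (D1 h hh)))
    [FiniteDimensional ℝ (D1 h hh ⧸ Z)]
    (Ub : Set (D1 h hh))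
    (hUb : Ub = {φ : D1 h hh | ∀ t ∈ Icc (-h) (d φ),
      |(φ : C(Icc (-h) 0, ℝ) × C(Icc (-h) 0, ℝ)).2 (projIcc (-h) 0 (by linarith) t)| < b}) :
    ∃ φ ψ, φ ∈ Ub ∩ (Z : Set (D1 h hh)) ∧ ψ ∈ Ub ∩ (Z : Set (D1 h hh)) ∧ d φ ≠ d ψ := by
  classical
  -- notation
  set Pr := C(Icc (-h) 0, ℝ) × C(Icc (-h) 0, ℝ)
  have hh' : (-h : ℝ) < 0 := by linarith
  -- Step 1: Z ≠ ⊥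
  have hZne : Z ≠ ⊥ := by
    intro hbot
    -- then D1 is finite dimensional
    have hfin : FiniteDimensional ℝ (D1 h hh) := by
      have : Function.Injective (Z.mkQ) := by
        rw [← LinearMap.ker_eq_bot, Submodule.ker_mkQ, hbot]
      exact FiniteDimensional.of_injective Z.mkQ this
    -- embed polynomials into D1
    let F : Polynomial ℝ → D1 h hh := fun P =>
      ⟨(⟨fun t => P.eval (t : ℝ), by fun_prop⟩,
        ⟨fun t => P.derivative.eval (t : ℝ), by fun_prop⟩), by
        intro t
        have := (P.hasDerivAt (t : ℝ)).hasDerivWithinAt (s := Icc (-h) 0)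
        refine this.congr ?_ ?_
        · intro s hs
          rw [projIcc_of_mem _ hs]; rfl
        · rw [projIcc_of_mem _ t.2]; rfl⟩
    let L : Polynomial ℝ →ₗ[ℝ] D1 h hh :=
      { toFun := F
        map_add' := by
          intro P Q
          apply Subtype.ext
          apply Prod.ext <;> ext t <;> simp [F]
        map_smul' := by
          intro c P
          apply Subtype.ext
          apply Prod.ext <;> ext t <;> simp [F] }
    have hLinj : Function.Injective L := by
      rw [← LinearMap.ker_eq_bot]
      ext P
      simp only [LinearMap.mem_ker, Submodule.mem_bot]
      constructor
      · intro hP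
        have h1 : ∀ t : Icc (-h) 0, P.eval (t : ℝ) = 0 := by
          intro t
          have := congrArg (fun q : D1 h hh => (q : Pr).1 t) hP
          simpa [L, F] using this
        refine P.eq_zero_of_infinite_isRoot ?_
        have : Set.Infinite (Icc (-h) (0:ℝ)) := Set.Icc_infinite hh'
        refine this.mono ?_
        intro x hx
        exact h1 ⟨x, hx⟩
      · rintro rfl
        apply Subtype.ext
        apply Prod.ext <;> ext t <;> simp [L, F]
    have : FiniteDimensional ℝ (Polynomial ℝ) := FiniteDimensional.of_injective L hLinj
    exact Polynomial.not_finite this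
  obtain ⟨p0, hp0Z, hp0ne⟩ := Submodule.exists_mem_ne_zero_of_ne_bot hZne
  -- Step 2: first component of p0 is nonzero
  have hfst : ((p0 : Pr).1 : C(Icc (-h) 0, ℝ)) ≠ 0 := by
    intro hz
    apply hp0ne
    have hsnd : ((p0 : Pr).2 : C(Icc (-h) 0, ℝ)) = 0 := by
      ext t
      have hmem := p0.2 t
      have hzero : HasDerivWithinAt
          (fun s : ℝ => (p0 : Pr).1 (projIcc (-h) 0 (le_of_lt hh') s)) 0
          (Icc (-h) 0) (t : ℝ) := by
        have : (fun s : ℝ => (p0 : Pr).1 (projIcc (-h) 0 (le_of_lt hh') s))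
            = fun _ => (0:ℝ) := by
          ext s; rw [hz]; simp
        rw [this]
        exact hasDerivWithinAt_const _ _ _
      have hud : UniqueDiffWithinAt ℝ (Icc (-h) (0:ℝ)) (t : ℝ) :=
        (uniqueDiffOn_Icc hh') _ t.2
      have := hud.eq_deriv _ hmem hzero
      simpa using this
    apply Subtype.ext
    apply Prod.ext
    · exact hz
    · exact hsnd
  obtain ⟨t₀, ht₀⟩ : ∃ t : Icc (-h) 0, (p0 : Pr).1 t ≠ 0 := by
    by_contra hc
    push_neg at hc
    exact hfst (ContinuousMap.ext hc)
  -- WLOG positive value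
  obtain ⟨p, hpZ, ht0p⟩ : ∃ p : D1 h hh, p ∈ Z ∧ 0 < (p : Pr).1 t₀ := by
    rcases lt_or_gt_of_ne ht₀ with hneg | hpos
    · refine ⟨-p0, Z.neg_mem hp0Z, ?_⟩
      have : ((-p0 : D1 h hh) : Pr).1 t₀ = -((p0 : Pr).1 t₀) := by simp
      rw [this]; linarith
    · exact ⟨p0, hp0Z, hpos⟩
  -- v is strictly monotone on [0, ∞) and zero on (-∞, 0]
  have hsm : StrictMonoOn v (Ici (0:ℝ)) := by
    apply strictMonoOn_of_deriv_pos (convex_Ici 0) (hv.continuous.continuousOn)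
    intro x hx
    rw [interior_Ici] at hx
    exact hv' x hx
  have hvle : ∀ y₁ y₂ : ℝ, y₁ ≤ y₂ → v y₁ ≤ v y₂ := by
    intro y₁ y₂ hle
    rcases le_or_gt y₂ 0 with h2 | h2
    · rw [hv0 y₁ (hle.trans h2), hv0 y₂ h2]
    rcases le_or_gt y₁ 0 with h1 | h1
    · rw [hv0 y₁ h1, ← hv0 0 le_rfl]
      exact (hsm (mem_Ici.mpr le_rfl) (le_of_lt h2) h2).le
    · rcases eq_or_lt_of_le hle with rfl | hlt
      · exact le_rfl
      · exact (hsm h1.le (h1.trans_le hle).le hlt).le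
  -- pick ε
  set M : ℝ := ‖(p : Pr).2‖ with hM
  have hMnn : 0 ≤ M := norm_nonneg _
  set ε : ℝ := b / (2 * (M + 1)) with hε
  have hεpos : 0 < ε := by positivity
  have hεM : 2 * ε * (M + 1) = b := by
    rw [hε]; field_simp
  -- helper: evaluation of scaled elements
  have heval1 : ∀ (c : ℝ) (x : Icc (-h) 0),
      ((c • p : D1 h hh) : Pr).1 x = c * (p : Pr).1 x := by
    intro c x; simp
  have heval2 : ∀ (c : ℝ) (x : Icc (-h) 0),
      ((c • p : D1 h hh) : Pr).2 x = c * (p : Pr).2 x := by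
    intro c x; simp
  have hUbmem : ∀ c : ℝ, |c| ≤ 2 * ε → (c • p) ∈ Ub := by
    intro c hc
    rw [hUb]
    intro t _
    rw [heval2]
    have hb1 : |(p : Pr).2 (projIcc (-h) 0 (le_of_lt hh') t)| ≤ M := by
      simpa using ContinuousMap.norm_coe_le_norm ((p : Pr).2) (projIcc (-h) 0 (le_of_lt hh') t)
    calc |c * (p : Pr).2 (projIcc (-h) 0 (le_of_lt hh') t)|
        = |c| * |(p : Pr).2 (projIcc (-h) 0 (le_of_lt hh') t)| := abs_mul _ _
      _ ≤ 2 * ε * M := by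
          apply mul_le_mul hc hb1 (abs_nonneg _)
          linarith
      _ < b := by nlinarith
  have hvc : Continuous v := hv.continuous
  -- the two elements
  refine ⟨ε • p, (2 * ε) • p, ?_, ?_, ?_⟩
  · exact ⟨hUbmem ε (by rw [abs_of_pos hεpos]; linarith), Z.smul_mem ε hpZ⟩
  · exact ⟨hUbmem (2 * ε) (by rw [abs_of_pos (by linarith)]), Z.smul_mem _ hpZ⟩
  · -- d differs
    rw [hd, hd]
    intro heq
    have hint := hδinj heq
    -- show strict inequality of integrals
    have hlt : (∫ t in (-h)..0, v (((ε • p : D1 h hh) : Pr).1 (projIcc (-h) 0 (le_of_lt hh') t)))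
        < ∫ t in (-h)..0, v ((((2 * ε) • p : D1 h hh) : Pr).1 (projIcc (-h) 0 (le_of_lt hh') t)) := by
      apply intervalIntegral.integral_lt_integral_of_continuousOn_of_le_of_exists_lt hh'
      · exact (hvc.comp ((ContinuousMap.continuous _).comp (continuous_projIcc))).continuousOn
      · exact (hvc.comp ((ContinuousMap.continuous _).comp (continuous_projIcc))).continuousOn
      · intro x _
        rw [heval1, heval1]
        rcases le_or_gt ((p : Pr).1 (projIcc (-h) 0 (le_of_lt hh') x)) 0 with hle | hlt
        · rw [hv0 _ (by nlinarith), hv0 _ (by nlinarith)]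
        · apply hvle; nlinarith
      · refine ⟨(t₀ : ℝ), t₀.2, ?_⟩
        rw [heval1, heval1, projIcc_of_mem _ t₀.2]
        apply hsm (mem_Ici.mpr (by nlinarith)) (mem_Ici.mpr (by nlinarith))
        nlinarith
    exact absurd hint hlt.ne
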